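/- arXiv:2210.10562 — 3 statements merged into one kernel-verified Lean document; each statement's English description precedes it below -/
import Mathlib

section
/- Let q be a prime power, n a positive integer, and α₁, …, αₙ distinct elements of F_{q^2} all lying in a set S = {α : α^q = aα + b} for some fixed a ∈ F_{q^2}^*, b ∈ F_{q^2}. Define u_i = ∏_{j ≠ i} (α_i − α_j)^{-1}. Then u_i^q = a^{-(n-1)} u_i for every i. -/
/-- If `α₁, …, αₙ` are distinct elements of `F_{q^2}` all satisfying
`α^q = aα + b` (with `a ≠ 0`), and `u_i = ∏_{j≠i} (α_i − α_j)⁻¹`, then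
`u_i^q = a^{-(n-1)} u_i` for every `i`. -/
theorem stmt_7 {F : Type*} [Field F] [Fintype F] (q : ℕ) (hq : IsPrimePow q)
    (hcard : Fintype.card F = q ^ 2) (n : ℕ) (hn : 0 < n) (a b : F) (ha : a ≠ 0)
    (α : Fin n → F) (hinj : Function.Injective α)
    (hα : ∀ i, (α i) ^ q = a * α i + b) :
    ∀ i : Fin n,
      ((∏ j ∈ Finset.univ.erase i, (α i - α j))⁻¹) ^ q
        = (a ^ (n - 1))⁻¹ * (∏ j ∈ Finset.univ.erase i, (α i - α j))⁻¹ := by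
  obtain ⟨r, k, hr, hk, rfl⟩ := hq
  set p := ringChar F with hpdef
  haveI : CharP F p := ringChar.charP F
  have hpprime : p.Prime := CharP.char_is_prime F p
  haveI : Fact p.Prime := ⟨hpprime⟩
  obtain ⟨m, -, hm⟩ := FiniteField.card F p
  have hrp : r = p := by
    have hdvd : r ∣ p ^ (m : ℕ) := by
      rw [← hm, hcard, ← pow_mul]
      exact dvd_pow_self r (by positivity)
    have : r ∣ p := (Nat.prime_iff.mpr hr).dvd_of_dvd_pow hdvd
    exact (Nat.prime_dvd_prime_iff_eq (Nat.prime_iff.mpr hr) hpprime).mp this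
  subst hrp
  -- the key Frobenius-type identity
  have hsub : ∀ x y : F, (x - y) ^ p ^ k = x ^ p ^ k - y ^ p ^ k := fun x y =>
    sub_pow_char_pow x y k
  intro i
  have hfactor : ∀ j ∈ Finset.univ.erase i, (α i - α j) ^ p ^ k = a * (α i - α j) := by
    intro j _
    rw [hsub, hα, hα]
    ring
  have hprod : (∏ j ∈ Finset.univ.erase i, (α i - α j)) ^ p ^ k
      = a ^ (n - 1) * ∏ j ∈ Finset.univ.erase i, (α i - α j) := by
    rw [← Finset.prod_pow, Finset.prod_congr rfl hfactor, Finset.prod_mul_distrib,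
      Finset.prod_const, Finset.card_erase_of_mem (Finset.mem_univ i), Finset.card_univ,
      Fintype.card_fin]
  rw [inv_pow, hprod, mul_inv]
end

section
/- Let q be a prime power, V the kernel of the trace on F_{q^2}, θ a primitive element of F_{q^2}, a ∈ V, and α₁,…,αₙ distinct elements of the coset aθ + V, say α_i = aθ + x_i with x_i ∈ V. Define u_i = ∏_{j≠i}(α_i − α_j)^{-1}. Then u_i^q = (−1)^{n−1} u_i for every i. In particular, if n is even then u_i^q = −u_i, and if n is odd then u_i ∈ F_q^*. -/
/-- Let `V` be the kernel of the trace, `θ` a primitive element, `a ∈ V`, and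
`α_i = aθ + x_i` with `x_i ∈ V` distinct. With `u_i = ∏_{j≠i}(α_i − α_j)⁻¹`,
one has `u_i^q = (−1)^{n−1} u_i`; in particular `u_i^q = −u_i` if `n` is even,
and `u_i ∈ F_q^*` if `n` is odd. -/
theorem stmt_8 {F : Type*} [Field F] [Fintype F] (q : ℕ) (hq : IsPrimePow q)
    (hcard : Fintype.card F = q ^ 2) (θ : F) (hθ : orderOf θ = q ^ 2 - 1)
    (n : ℕ) (a : F) (ha : a ^ q + a = 0)
    (x : Fin n → F) (hxinj : Function.Injective x) (hx : ∀ i, (x i) ^ q + x i = 0)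
    (α : Fin n → F) (hα : ∀ i, α i = a * θ + x i) :
    ∀ i : Fin n,
      ((∏ j ∈ Finset.univ.erase i, (α i - α j))⁻¹) ^ q
          = (-1 : F) ^ (n - 1) * (∏ j ∈ Finset.univ.erase i, (α i - α j))⁻¹ ∧
      (Even n →
        ((∏ j ∈ Finset.univ.erase i, (α i - α j))⁻¹) ^ q
          = -(∏ j ∈ Finset.univ.erase i, (α i - α j))⁻¹) ∧
      (Odd n →
        ((∏ j ∈ Finset.univ.erase i, (α i - α j))⁻¹) ^ q
          = (∏ j ∈ Finset.univ.erase i, (α i - α j))⁻¹ ∧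
        (∏ j ∈ Finset.univ.erase i, (α i - α j))⁻¹ ≠ 0) := by
  obtain ⟨p, k, hp, hk, rfl⟩ := hq
  have hp' : p.Prime := hp.nat_prime
  have hr : ringChar F = p := by
    have h1 : (ringChar F).Prime := CharP.char_is_prime F (ringChar F)
    have h2 : ringChar F ∣ (p ^ k) ^ 2 := by
      rw [← hcard]
      exact (CharP.cast_eq_zero_iff F (ringChar F) _).mp (Nat.cast_card_eq_zero F)
    have h3 := h1.dvd_of_dvd_pow (h1.dvd_of_dvd_pow h2)
    exact (Nat.prime_dvd_prime_iff_eq h1 hp').mp h3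
  haveI : CharP F p := hr ▸ ringChar.charP F
  haveI : Fact p.Prime := ⟨hp'⟩
  intro i
  have hkey : ∀ j : Fin n, (α i - α j) ^ p ^ k = -(α i - α j) := by
    intro j
    have h1 : α i - α j = x i - x j := by rw [hα, hα]; ring
    have e1 : x i ^ p ^ k = -(x i) := eq_neg_of_add_eq_zero_left (hx i)
    have e2 : x j ^ p ^ k = -(x j) := eq_neg_of_add_eq_zero_left (hx j)
    rw [h1, sub_pow_char_pow, e1, e2]; ring
  have hcarde : (Finset.univ.erase i).card = n - 1 := by
    rw [Finset.card_erase_of_mem (Finset.mem_univ i), Finset.card_univ, Fintype.card_fin]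
  have hP : (∏ j ∈ Finset.univ.erase i, (α i - α j)) ^ p ^ k
      = (-1 : F) ^ (n - 1) * ∏ j ∈ Finset.univ.erase i, (α i - α j) := by
    rw [← Finset.prod_pow]
    calc ∏ j ∈ Finset.univ.erase i, (α i - α j) ^ p ^ k
        = ∏ j ∈ Finset.univ.erase i, (-1 : F) * (α i - α j) := by
          refine Finset.prod_congr rfl fun j _ => ?_
          rw [hkey j]; ring
      _ = (-1 : F) ^ (n - 1) * ∏ j ∈ Finset.univ.erase i, (α i - α j) := by
          rw [Finset.prod_mul_distrib, Finset.prod_const, hcarde]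
  have hPne : (∏ j ∈ Finset.univ.erase i, (α i - α j)) ≠ 0 := by
    refine Finset.prod_ne_zero_iff.mpr fun j hj => ?_
    have hji : j ≠ i := Finset.ne_of_mem_erase hj
    have h1 : α i - α j = x i - x j := by rw [hα, hα]; ring
    rw [h1]
    exact sub_ne_zero.mpr fun h => hji (hxinj h).symm
  have hmain : ((∏ j ∈ Finset.univ.erase i, (α i - α j))⁻¹) ^ p ^ k
      = (-1 : F) ^ (n - 1) * (∏ j ∈ Finset.univ.erase i, (α i - α j))⁻¹ := by
    rw [inv_pow, hP, mul_inv, ← inv_pow, inv_neg_one]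
  have hn1 : 1 ≤ n := i.pos
  refine ⟨hmain, ?_, ?_⟩
  · intro hne
    have hodd : Odd (n - 1) := Nat.Even.sub_odd hn1 hne odd_one
    rw [hmain, hodd.neg_one_pow, neg_one_mul]
  · intro hno
    have heven : Even (n - 1) := Nat.Odd.sub_odd hno odd_one
    exact ⟨by rw [hmain, heven.neg_one_pow, one_mul], inv_ne_zero hPne⟩
end

section
/- Let q be a prime power, n odd with n ≥ 2q − 1, and α₁, …, αₙ distinct nonzero elements of F_{q^2}^*. Then there do not exist x₁, …, xₙ ∈ F_q^* satisfying simultaneously: ∑_{l=1}^n α_l^{i+jq} x_l = 0 for all 0 ≤ i, j ≤ (n−1)/2 with (i,j) ≠ ((n−1)/2, (n−1)/2), and ∑_{l=1}^n α_l^{((n−1)/2)(q+1)} x_l = −1. -/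
/-- Let `n ≥ 2q − 1` be odd and `α₁,…,αₙ` distinct nonzero elements of
`F_{q^2}^*`. There is no `x ∈ (F_q^*)^n` with `∑_l α_l^{i+jq} x_l = 0` for all
`0 ≤ i, j ≤ (n−1)/2` with `(i,j) ≠ ((n−1)/2,(n−1)/2)`, and
`∑_l α_l^{((n−1)/2)(q+1)} x_l = −1`. -/
theorem stmt_14 {F : Type*} [Field F] [Fintype F] (q : ℕ) (hq : IsPrimePow q)
    (hcard : Fintype.card F = q ^ 2) (n : ℕ) (hodd : Odd n) (hn : 2 * q - 1 ≤ n)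
    (α : Fin n → F) (hinj : Function.Injective α) (hα : ∀ l, α l ≠ 0) :
    ¬ ∃ x : Fin n → F,
      (∀ l, x l ≠ 0 ∧ (x l) ^ q = x l) ∧
      (∀ i j : ℕ, i ≤ (n - 1) / 2 → j ≤ (n - 1) / 2 →
        ¬(i = (n - 1) / 2 ∧ j = (n - 1) / 2) →
        ∑ l, (α l) ^ (i + j * q) * x l = 0) ∧
      (∑ l, (α l) ^ (((n - 1) / 2) * (q + 1)) * x l = -1) := by
  rintro ⟨x, hx, h0, h1⟩
  obtain ⟨k, hk⟩ := hodd
  have hq2 : 2 ≤ q := hq.two_le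
  set m := (n - 1) / 2 with hm
  have hmk : m = k := by omega
  have hs : m + 1 = (m + 1 - q) + q := by omega
  set s := m + 1 - q with hsdef
  have hsm : s < m := by omega
  have hmul : m * (q + 1) = s * (q + 1) + (q ^ 2 - 1) := by
    have h1' : (m + 1) * (q + 1) = s * (q + 1) + (q ^ 2 + q) := by
      rw [hs]; ring
    have hQ1 : 1 ≤ q ^ 2 := Nat.one_le_pow _ _ (by omega)
    have e1 : (m + 1) * (q + 1) = m * (q + 1) + (q + 1) := by ring
    set Q := q ^ 2
    set M := m * (q + 1)
    set S := s * (q + 1)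
    omega
  have hpow : ∀ l, (α l) ^ (m * (q + 1)) = (α l) ^ (s + s * q) := by
    intro l
    have h1'' : (α l) ^ (q ^ 2 - 1) = 1 := by
      rw [← hcard]; exact FiniteField.pow_card_sub_one_eq_one _ (hα l)
    rw [show s + s * q = s * (q + 1) by ring] at *
    rw [hmul, pow_add, h1'', mul_one]
  have h2 := h0 s s (by omega) (by omega) (by omega)
  have hfin : (-1 : F) = 0 := by
    rw [← h1, ← h2]
    exact Finset.sum_congr rfl fun l _ => by rw [hpow l]
  exact one_ne_zero (neg_eq_zero.mp hfin)
end
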